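/- Let C be an n×n real matrix of the form C v = u ⊙ v + (1/2) w ⊙ (T v) + (1/2) T*(w ⊙ v), where ⊙ is coordinatewise product, T is the subdiagonal shift, and |u_k|, |w_k| ≤ √(ε η̃_k + c) with η̃_k = k/m. Then ‖C v‖ ≤ 2 ‖(√(ε η̃ + c)) ⊙ v‖ for all v ∈ ℝⁿ, where (√(ε η̃ + c)) ⊙ v denotes the vector with entries √(ε k/m + c)·v_k. -/

import Mathlib

lemma shift_sum_le {n : ℕ} (a : Fin n → ℝ) (ha : ∀ k, 0 ≤ a k) :
    ∑ k : Fin n, (if h : (k : ℕ) + 1 < n then a ⟨(k : ℕ) + 1, h⟩ else 0)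
      ≤ ∑ k, a k := by
  set a' : ℕ → ℝ := fun j => if h : j < n then a ⟨j, h⟩ else 0 with ha'
  have ha'nn : ∀ j, 0 ≤ a' j := by
    intro j
    simp only [ha']
    split
    · exact ha _
    · exact le_rfl
  have h1 : (∑ k : Fin n, if h : (k : ℕ) + 1 < n then a ⟨(k : ℕ) + 1, h⟩ else 0)
      = ∑ j ∈ Finset.range n, a' (j + 1) := by
    rw [← Fin.sum_univ_eq_sum_range (fun j => a' (j + 1)) n]
  have h2 : ∑ k : Fin n, a k = ∑ j ∈ Finset.range n, a' j := by
    rw [← Fin.sum_univ_eq_sum_range a' n]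
    apply Finset.sum_congr rfl
    intro k _
    simp [ha']
  rw [h1, h2]
  have h3 := Finset.sum_range_succ' a' n
  have h4 := Finset.sum_range_succ a' n
  have h5 : a' n = 0 := by simp [ha']
  have := ha'nn 0
  linarith

lemma pred_sum_le {n : ℕ} (a : Fin n → ℝ) (ha : ∀ k, 0 ≤ a k) :
    ∑ k : Fin n, (if 0 < (k : ℕ) then
        a ⟨(k : ℕ) - 1, lt_of_le_of_lt (Nat.sub_le _ _) k.isLt⟩ else 0)
      ≤ ∑ k, a k := by
  set a' : ℕ → ℝ := fun j => if h : j < n then a ⟨j, h⟩ else 0 with ha'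
  have ha'nn : ∀ j, 0 ≤ a' j := by
    intro j
    simp only [ha']
    split
    · exact ha _
    · exact le_rfl
  have h1 : (∑ k : Fin n, if 0 < (k : ℕ) then
        a ⟨(k : ℕ) - 1, lt_of_le_of_lt (Nat.sub_le _ _) k.isLt⟩ else 0)
      = ∑ j ∈ Finset.range n, (if 0 < j then a' (j - 1) else 0) := by
    rw [← Fin.sum_univ_eq_sum_range (fun j => if 0 < j then a' (j - 1) else 0) n]
    apply Finset.sum_congr rfl
    intro k _
    by_cases hk : 0 < (k : ℕ)
    · simp only [hk, if_true, ha']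
      rw [dif_pos (lt_of_le_of_lt (Nat.sub_le _ _) k.isLt)]
    · simp [hk]
  have h2 : ∑ k : Fin n, a k = ∑ j ∈ Finset.range n, a' j := by
    rw [← Fin.sum_univ_eq_sum_range a' n]
    apply Finset.sum_congr rfl
    intro k _
    simp [ha']
  rw [h1, h2]
  cases n with
  | zero => simp
  | succ n' =>
    rw [Finset.sum_range_succ' (fun j => if 0 < j then a' (j - 1) else 0) n',
      Finset.sum_range_succ a' n']
    simp only [Nat.succ_sub_one, if_pos (Nat.succ_pos _), if_neg (lt_irrefl 0)]
    have := ha'nn n'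
    linarith

lemma euclid_norm_le {n : ℕ} (x y : EuclideanSpace ℝ (Fin n))
    (h : ∀ k, |x k| ≤ |y k|) : ‖x‖ ≤ ‖y‖ := by
  rw [EuclideanSpace.norm_eq, EuclideanSpace.norm_eq]
  apply Real.sqrt_le_sqrt
  apply Finset.sum_le_sum
  intro i _
  simp only [Real.norm_eq_abs]
  exact pow_le_pow_left₀ (abs_nonneg _) (h i) 2

set_option maxHeartbeats 1000000 in
/-- If `C v = u ⊙ v + ½ w ⊙ (T v) + ½ T*(w ⊙ v)` with `T` the subdiagonal
shift and `|u_k|, |w_k| ≤ √(ε η̃_k + c)` where `η̃_k = k/m`, then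
`‖C v‖ ≤ 2 ‖(√(ε η̃ + c)) ⊙ v‖` in the Euclidean norm. -/
theorem noise_operator_norm_bound {n : ℕ} (m ε c : ℝ)
    (hm : 0 < m) (hε : 0 < ε) (hc : 0 < c)
    (u w v Cv sv : EuclideanSpace ℝ (Fin n))
    (hu : ∀ k : Fin n, |u k| ≤ Real.sqrt (ε * (((k : ℕ) + 1 : ℕ) : ℝ) / m + c))
    (hw : ∀ k : Fin n, |w k| ≤ Real.sqrt (ε * (((k : ℕ) + 1 : ℕ) : ℝ) / m + c))
    (hCv : ∀ k : Fin n,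
      Cv k = u k * v k
        + (1 / 2) * w k * (if h : (k : ℕ) + 1 < n then v ⟨(k : ℕ) + 1, h⟩ else 0)
        + (1 / 2) * (if 0 < (k : ℕ) then
            w ⟨(k : ℕ) - 1, lt_of_le_of_lt (Nat.sub_le _ _) k.isLt⟩
              * v ⟨(k : ℕ) - 1, lt_of_le_of_lt (Nat.sub_le _ _) k.isLt⟩
          else 0))
    (hsv : ∀ k : Fin n,
      sv k = Real.sqrt (ε * (((k : ℕ) + 1 : ℕ) : ℝ) / m + c) * v k) :
    ‖Cv‖ ≤ 2 * ‖sv‖ := by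
  classical
  set A : EuclideanSpace ℝ (Fin n) := WithLp.toLp 2 (fun k => u k * v k) with hA
  set B : EuclideanSpace ℝ (Fin n) := WithLp.toLp 2 (fun k =>
    (1 / 2) * w k * (if h : (k : ℕ) + 1 < n then v ⟨(k : ℕ) + 1, h⟩ else 0)) with hB
  set D : EuclideanSpace ℝ (Fin n) := WithLp.toLp 2 (fun k =>
    (1 / 2) * (if 0 < (k : ℕ) then
        w ⟨(k : ℕ) - 1, lt_of_le_of_lt (Nat.sub_le _ _) k.isLt⟩
          * v ⟨(k : ℕ) - 1, lt_of_le_of_lt (Nat.sub_le _ _) k.isLt⟩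
      else 0)) with hD
  have hsum : Cv = A + B + D := by
    ext k
    simp only [PiLp.add_apply, hA, hB, hD, PiLp.toLp_apply]
    exact hCv k
  set sv2 : EuclideanSpace ℝ (Fin n) := (2⁻¹ : ℝ) • sv with hsv2
  have hsv2app : ∀ j : Fin n, sv2 j = 2⁻¹ * sv j := fun j => rfl
  have hsv2n : ‖sv2‖ = 2⁻¹ * ‖sv‖ := by
    rw [hsv2, norm_smul, Real.norm_eq_abs]
    norm_num
  -- bound A
  have hAle : ‖A‖ ≤ ‖sv‖ := by
    apply euclid_norm_le
    intro k
    simp only [hA, PiLp.toLp_apply]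
    rw [hsv k, abs_mul, abs_mul, abs_of_nonneg (Real.sqrt_nonneg _)]
    exact mul_le_mul_of_nonneg_right (hu k) (abs_nonneg _)
  -- bound B
  have hBle : ‖B‖ ≤ ‖sv2‖ := by
    rw [EuclideanSpace.norm_eq, EuclideanSpace.norm_eq]
    apply Real.sqrt_le_sqrt
    calc ∑ k, ‖B k‖ ^ 2
        ≤ ∑ k : Fin n, (if h : (k : ℕ) + 1 < n then ‖sv2 ⟨(k : ℕ) + 1, h⟩‖ ^ 2 else 0) := by
          apply Finset.sum_le_sum
          intro k _
          by_cases h : (k : ℕ) + 1 < n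
          · rw [dif_pos h]
            have hBk : B k = (1 / 2) * w k * v ⟨(k : ℕ) + 1, h⟩ := by
              simp only [hB, PiLp.toLp_apply]
              rw [dif_pos h]
            set j : Fin n := ⟨(k : ℕ) + 1, h⟩ with hj
            set s1 : ℝ := Real.sqrt (ε * (((k : ℕ) + 1 : ℕ) : ℝ) / m + c) with hs1
            set s2 : ℝ := Real.sqrt (ε * ((((k : ℕ) + 1 : ℕ) + 1 : ℕ) : ℝ) / m + c) with hs2
            have hsvj : sv j = s2 * v j := hsv j
            have hs12 : s1 ≤ s2 := by
              rw [hs1, hs2]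
              apply Real.sqrt_le_sqrt
              have hnum : ((((k : ℕ) + 1 : ℕ)) : ℝ) ≤ (((((k : ℕ) + 1 : ℕ)) + 1 : ℕ) : ℝ) := by
                push_cast
                linarith
              gcongr
            have hkey : |B k| ≤ |sv2 j| := by
              have e1 : |B k| = 1 / 2 * (|w k| * |v j|) := by
                rw [hBk, abs_mul, abs_mul,
                  abs_of_nonneg (by norm_num : (0:ℝ) ≤ 1 / 2)]
                ring
              have e2 : |sv2 j| = 2⁻¹ * (s2 * |v j|) := by
                rw [hsv2app j, hsvj, abs_mul, abs_mul,
                  abs_of_nonneg (Real.sqrt_nonneg _),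
                  abs_of_nonneg (by norm_num : (0:ℝ) ≤ (2:ℝ)⁻¹)]
              rw [e1, e2]
              have p1 := mul_le_mul_of_nonneg_right (hw k) (abs_nonneg (v j))
              have p2 := mul_le_mul_of_nonneg_right hs12 (abs_nonneg (v j))
              rw [← hs1] at p1
              linarith
            calc ‖B k‖ ^ 2 = |B k| ^ 2 := by rw [Real.norm_eq_abs]
              _ ≤ |sv2 j| ^ 2 := pow_le_pow_left₀ (abs_nonneg _) hkey 2
              _ = ‖sv2 j‖ ^ 2 := by rw [Real.norm_eq_abs]
          · rw [dif_neg h]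
            have hBk : B k = 0 := by
              simp only [hB, PiLp.toLp_apply]
              rw [dif_neg h]
              ring
            rw [hBk]
            simp
      _ ≤ ∑ k, ‖sv2 k‖ ^ 2 := shift_sum_le (fun j => ‖sv2 j‖ ^ 2) (fun k => by positivity)
  -- bound D
  have hDle : ‖D‖ ≤ ‖sv2‖ := by
    rw [EuclideanSpace.norm_eq, EuclideanSpace.norm_eq]
    apply Real.sqrt_le_sqrt
    calc ∑ k, ‖D k‖ ^ 2
        ≤ ∑ k : Fin n, (if 0 < (k : ℕ) then
            ‖sv2 ⟨(k : ℕ) - 1, lt_of_le_of_lt (Nat.sub_le _ _) k.isLt⟩‖ ^ 2 else 0) := by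
          apply Finset.sum_le_sum
          intro k _
          by_cases h : 0 < (k : ℕ)
          · rw [if_pos h]
            set j : Fin n := ⟨(k : ℕ) - 1, lt_of_le_of_lt (Nat.sub_le _ _) k.isLt⟩ with hj
            have hDk : D k = (1 / 2) * (w j * v j) := by
              simp only [hD, PiLp.toLp_apply]
              rw [if_pos h]
            set s1 : ℝ := Real.sqrt (ε * (((j : ℕ) + 1 : ℕ) : ℝ) / m + c) with hs1
            have hsvj : sv j = s1 * v j := hsv j
            have hkey : |D k| ≤ |sv2 j| := by
              have e1 : |D k| = 1 / 2 * (|w j| * |v j|) := by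
                rw [hDk, abs_mul, abs_mul,
                  abs_of_nonneg (by norm_num : (0:ℝ) ≤ 1 / 2)]
              have e2 : |sv2 j| = 2⁻¹ * (s1 * |v j|) := by
                rw [hsv2app j, hsvj, abs_mul, abs_mul,
                  abs_of_nonneg (Real.sqrt_nonneg _),
                  abs_of_nonneg (by norm_num : (0:ℝ) ≤ (2:ℝ)⁻¹)]
              rw [e1, e2]
              have p1 := mul_le_mul_of_nonneg_right (hw j) (abs_nonneg (v j))
              rw [← hs1] at p1
              linarith
            calc ‖D k‖ ^ 2 = |D k| ^ 2 := by rw [Real.norm_eq_abs]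
              _ ≤ |sv2 j| ^ 2 := pow_le_pow_left₀ (abs_nonneg _) hkey 2
              _ = ‖sv2 j‖ ^ 2 := by rw [Real.norm_eq_abs]
          · rw [if_neg h]
            have hDk : D k = 0 := by
              simp only [hD, PiLp.toLp_apply]
              rw [if_neg h]
              ring
            rw [hDk]
            simp
      _ ≤ ∑ k, ‖sv2 k‖ ^ 2 := pred_sum_le (fun j => ‖sv2 j‖ ^ 2) (fun k => by positivity)
  calc ‖Cv‖ = ‖A + B + D‖ := by rw [hsum]
    _ ≤ ‖A‖ + ‖B‖ + ‖D‖ := norm_add₃_le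
    _ ≤ ‖sv‖ + ‖sv2‖ + ‖sv2‖ := by linarith
    _ = 2 * ‖sv‖ := by rw [hsv2n]; ring
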